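/- Let d ≥ 1 and D > 0, and let M be the normalized Maxwellian on ℝ^d. There exist constants r₀ > 0 and C > 0, depending only on d and D, such that for every ε > 0 and every measurable f : ℝ^d → [0,∞) with ρ := ∫_{ℝ^d} f(ξ) dξ ∈ (0,∞) and ∫_{ℝ^d} |ξ|² f(ξ) dξ < ∞, one has ∫_{ℝ^d} |ξ|² |f(ξ) − ρ M(ξ)| dξ ≤ r₀ ε² ∫_{ℝ^d} 𝒟(ξ) dξ + C ε ρ^{1/2} (∫_{ℝ^d} 𝒟(ξ) dξ)^{1/2}, the inequality being understood in [0,∞]. -/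

import Mathlib

open MeasureTheory
open scoped ENNReal Classical

/-- The normalized Maxwellian on `ℝ^d` with diffusion coefficient `D`:
`M(ξ) = (2πD)^{-d/2} exp(−|ξ|²/(2D))`. -/
noncomputable def maxwellian (d : ℕ) (D : ℝ) (ξ : EuclideanSpace ℝ (Fin d)) : ℝ :=
  (2 * Real.pi * D) ^ (-(d : ℝ) / 2) * Real.exp (-‖ξ‖ ^ 2 / (2 * D))

/-- The dissipation density `𝒟(ξ) = ε⁻² (f(ξ) − ρM(ξ))(log f(ξ) − log (ρM(ξ)))`, as a
`[0,∞]`-valued function: it is `+∞` at points where `f` vanishes but `ρM` does not,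
and given by the obvious formula elsewhere (in particular `0` where `f = ρM`). -/
noncomputable def dissipation (d : ℕ) (D ε ρ : ℝ) (f : EuclideanSpace ℝ (Fin d) → ℝ)
    (ξ : EuclideanSpace ℝ (Fin d)) : ℝ≥0∞ :=
  if f ξ = 0 ∧ ρ * maxwellian d D ξ ≠ 0 then ⊤
  else ENNReal.ofReal
    ((f ξ - ρ * maxwellian d D ξ) * (Real.log (f ξ) - Real.log (ρ * maxwellian d D ξ)) / ε ^ 2)

section aux


lemma log_quad_lower {u v : ℝ} (hu : 0 < u) (huv : u ≤ v) :
    (v - u) ^ 2 / v ≤ (v - u) * (Real.log v - Real.log u) := by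
  have hv : 0 < v := hu.trans_le huv
  have h1 : Real.log u - Real.log v ≤ u / v - 1 := by
    have := Real.log_le_sub_one_of_pos (show 0 < u / v by positivity)
    rwa [Real.log_div hu.ne' hv.ne'] at this
  have h2 : (v - u) / v ≤ Real.log v - Real.log u := by
    rw [sub_div, div_self hv.ne']; linarith
  calc (v - u) ^ 2 / v = (v - u) * ((v - u) / v) := by ring
  _ ≤ (v - u) * (Real.log v - Real.log u) :=
      mul_le_mul_of_nonneg_left h2 (by linarith)

lemma P_nonneg {a m : ℝ} (ha : 0 < a) (hm : 0 < m) :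
    0 ≤ (a - m) * (Real.log a - Real.log m) := by
  rcases le_total a m with h | h
  · have h' := Real.log_le_log ha h
    nlinarith [mul_nonneg (sub_nonneg.2 h) (sub_nonneg.2 h')]
  · have h' := Real.log_le_log hm h
    exact mul_nonneg (by linarith) (by linarith)

lemma key_real {D ρ c a x m B P : ℝ} (hD : 0 < D) (hρ : 0 < ρ) (hc : 0 < c)
    (ha : 0 < a) (hx : 0 ≤ x)
    (hm_def : m = ρ * (c * Real.exp (-x / (2 * D))))
    (hB_def : B = Real.sqrt (2 * (ρ * c)) * Real.exp (-x / (8 * D)))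
    (hP_def : P = (a - m) * (Real.log a - Real.log m)) :
    x * |a - m| ≤ 8 * D * P + x * B * Real.sqrt P := by
  have hm : 0 < m := by rw [hm_def]; positivity
  have hP : 0 ≤ P := hP_def ▸ P_nonneg ha hm
  have hB : 0 ≤ B := by rw [hB_def]; positivity
  have hBsq : B ^ 2 = 2 * (ρ * c) * Real.exp (-x / (4 * D)) := by
    rw [hB_def, mul_pow, Real.sq_sqrt (by positivity), sq, ← Real.exp_add,
      show -x / (8 * D) + -x / (8 * D) = -x / (4 * D) by field_simp; ring]
  have hexp_mono : Real.exp (-x / (2 * D)) ≤ Real.exp (-x / (4 * D)) := by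
    apply Real.exp_le_exp.2
    rw [neg_div, neg_div, neg_le_neg_iff]
    gcongr <;> linarith
  have reduce : (a - m) ^ 2 ≤ B ^ 2 * P → |a - m| ≤ B * Real.sqrt P := by
    intro h
    have := Real.sqrt_le_sqrt h
    rwa [Real.sqrt_sq_eq_abs, Real.sqrt_mul (by positivity), Real.sqrt_sq hB] at this
  have side_nonneg : 0 ≤ 8 * D * P := by positivity
  rcases le_or_gt a (2 * m) with h2 | h2
  · have hquad : (a - m) ^ 2 ≤ 2 * m * P := by
      rcases le_total a m with h | h
      · have h1 := log_quad_lower ha h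
        have h1' : (m - a) ^ 2 ≤ m * ((m - a) * (Real.log m - Real.log a)) := by
          have := (div_le_iff₀ hm).1 h1
          linarith
        have heq : (m - a) * (Real.log m - Real.log a) = P := by rw [hP_def]; ring
        rw [heq] at h1'
        nlinarith
      · have h1 := log_quad_lower hm h
        have h1' : (a - m) ^ 2 ≤ a * P := by
          rw [← hP_def] at h1
          have := (div_le_iff₀ ha).1 h1
          linarith
        nlinarith
    have hB2 : 2 * m ≤ B ^ 2 := by
      rw [hBsq, hm_def]
      calc 2 * (ρ * (c * Real.exp (-x / (2 * D))))
          = 2 * (ρ * c) * Real.exp (-x / (2 * D)) := by ring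
      _ ≤ 2 * (ρ * c) * Real.exp (-x / (4 * D)) := by
          apply mul_le_mul_of_nonneg_left hexp_mono (by positivity)
    have h3 := reduce (hquad.trans (mul_le_mul_of_nonneg_right hB2 hP))
    have h4 : x * |a - m| ≤ x * (B * Real.sqrt P) :=
      mul_le_mul_of_nonneg_left h3 hx
    rw [show x * B * Real.sqrt P = x * (B * Real.sqrt P) by ring]
    linarith
  · have ham : 0 < a - m := by linarith
    have hL2 : Real.log 2 ≤ Real.log a - Real.log m := by
      have := Real.log_le_log (by positivity) h2.le
      rw [Real.log_mul two_ne_zero hm.ne'] at this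
      linarith
    have hlog2 : (0.6931471803 : ℝ) < Real.log 2 := Real.log_two_gt_d9
    rcases le_or_gt (x / (4 * D)) (Real.log a - Real.log m) with hL | hL
    · have h1 : x ≤ 4 * D * (Real.log a - Real.log m) := by
        rw [div_le_iff₀ (by positivity : (0:ℝ) < 4 * D)] at hL; linarith
      have hmain : x * (a - m) ≤ 8 * D * P := by
        rw [hP_def]
        nlinarith [mul_le_mul_of_nonneg_left h1 ham.le]
      rw [abs_of_pos ham]
      have hterm : 0 ≤ x * B * Real.sqrt P :=
        mul_nonneg (mul_nonneg hx hB) (Real.sqrt_nonneg P)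
      linarith
    · have ha_lt : a ≤ ρ * c * Real.exp (-x / (4 * D)) := by
        have h1 : Real.log a < Real.log m + x / (4 * D) := by linarith
        have h2' : a < m * Real.exp (x / (4 * D)) := by
          have := Real.exp_lt_exp.2 h1
          rwa [Real.exp_log ha, Real.exp_add, Real.exp_log hm] at this
        have heq : m * Real.exp (x / (4 * D)) = ρ * c * Real.exp (-x / (4 * D)) := by
          rw [hm_def, show ρ * (c * Real.exp (-x / (2 * D))) * Real.exp (x / (4 * D))
            = ρ * c * (Real.exp (-x / (2 * D)) * Real.exp (x / (4 * D))) by ring,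
            ← Real.exp_add, show -x / (2 * D) + x / (4 * D) = -x / (4 * D) by
              field_simp; ring]
        linarith [heq ▸ h2']
      have hquad : (a - m) ^ 2 ≤ B ^ 2 * P := by
        have hPge : (a - m) * Real.log 2 ≤ P := by
          rw [hP_def]; exact mul_le_mul_of_nonneg_left hL2 ham.le
        have hlg : (0:ℝ) < Real.log 2 := by linarith
        have step1 : (a - m) ^ 2 * Real.log 2 ≤ a * P := by
          calc (a - m) ^ 2 * Real.log 2 = (a - m) * ((a - m) * Real.log 2) := by ring
          _ ≤ a * ((a - m) * Real.log 2) := by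
              apply mul_le_mul_of_nonneg_right (by linarith : a - m ≤ a)
              exact mul_nonneg ham.le hlg.le
          _ ≤ a * P := mul_le_mul_of_nonneg_left hPge ha.le
        have step2 : a * P ≤ ρ * c * Real.exp (-x / (4 * D)) * P :=
          mul_le_mul_of_nonneg_right ha_lt hP
        have step3 : (a - m) ^ 2 ≤ ρ * c * Real.exp (-x / (4 * D)) / Real.log 2 * P := by
          rw [div_mul_eq_mul_div, le_div_iff₀ hlg]
          calc (a - m) ^ 2 * Real.log 2 ≤ a * P := step1
          _ ≤ _ := step2
        refine step3.trans ?_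
        rw [hBsq]
        apply mul_le_mul_of_nonneg_right _ hP
        rw [div_le_iff₀ hlg]
        have hE : (0:ℝ) < ρ * c * Real.exp (-x / (4 * D)) := by positivity
        nlinarith [hE, hlg, hlog2]
      have h3 := reduce hquad
      have h4 : x * |a - m| ≤ x * (B * Real.sqrt P) :=
        mul_le_mul_of_nonneg_left h3 hx
      rw [show x * B * Real.sqrt P = x * (B * Real.sqrt P) by ring]
      linarith

lemma gauss_integrable (d : ℕ) {b : ℝ} (hb : 0 < b) :
    Integrable (fun ξ : EuclideanSpace ℝ (Fin d) => Real.exp (-b * ‖ξ‖ ^ 2)) := by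
  have h := GaussianFourier.integrable_cexp_neg_mul_sq_norm_add (V := EuclideanSpace ℝ (Fin d))
    (b := (b : ℂ)) (by simpa using hb) 0 0
  have h2 := h.re
  refine h2.congr (Filter.Eventually.of_forall fun ξ => ?_)
  simp only [neg_mul, zero_mul, add_zero]
  have hc : -((b : ℂ) * (‖ξ‖ : ℂ) ^ 2) = ((-(b * ‖ξ‖ ^ 2) : ℝ) : ℂ) := by push_cast; ring
  rw [hc, ← Complex.ofReal_exp]
  exact RCLike.ofReal_re _

lemma gauss4_integrable (d : ℕ) {b : ℝ} (hb : 0 < b) :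
    Integrable (fun ξ : EuclideanSpace ℝ (Fin d) => ‖ξ‖ ^ 4 * Real.exp (-b * ‖ξ‖ ^ 2)) := by
  have hint := (gauss_integrable d (show 0 < b / 2 by linarith)).const_mul (16 / b ^ 2)
  refine hint.mono' ?_ (Filter.Eventually.of_forall fun ξ => ?_)
  · apply Measurable.aestronglyMeasurable
    have : Measurable fun ξ : EuclideanSpace ℝ (Fin d) => ‖ξ‖ := measurable_norm
    exact ((this.pow_const 4).mul ((this.pow_const 2).const_mul (-b)).exp)
  · have hs : (0:ℝ) ≤ ‖ξ‖ ^ 2 := by positivity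
    set s := ‖ξ‖ ^ 2 with hs_def
    have hnorm : ‖‖ξ‖ ^ 4 * Real.exp (-b * s)‖ = s ^ 2 * Real.exp (-b * s) := by
      rw [Real.norm_eq_abs, abs_of_nonneg (by positivity)]
      congr 1
      rw [hs_def]; ring
    rw [hnorm]
    -- s^2 * exp(-b s) ≤ 16/b^2 * exp(-(b/2) s)
    have hu : (b / 2 * s) ^ 2 ≤ 4 * Real.exp (b / 2 * s) := by
      have h1 : 1 + b / 2 * s / 2 ≤ Real.exp (b / 2 * s / 2) := by
        have := Real.add_one_le_exp (b / 2 * s / 2); linarith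
      have hmul : (1 + b / 2 * s / 2) * (1 + b / 2 * s / 2) ≤
          Real.exp (b / 2 * s / 2) * Real.exp (b / 2 * s / 2) :=
        mul_le_mul h1 h1 (by positivity) (Real.exp_pos _).le
      have he : Real.exp (b / 2 * s) = Real.exp (b / 2 * s / 2) * Real.exp (b / 2 * s / 2) := by
        rw [← Real.exp_add]; congr 1; ring
      have hu0 : 0 ≤ b / 2 * s := by positivity
      nlinarith [hmul, he, hu0]
    have hs2 : s ^ 2 ≤ 16 / b ^ 2 * Real.exp (b / 2 * s) := by
      have hb2 : (0:ℝ) < b ^ 2 := by positivity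
      rw [div_mul_eq_mul_div, le_div_iff₀ hb2]
      nlinarith [hu]
    calc s ^ 2 * Real.exp (-b * s)
        ≤ 16 / b ^ 2 * Real.exp (b / 2 * s) * Real.exp (-b * s) := by
          apply mul_le_mul_of_nonneg_right hs2 (Real.exp_pos _).le
    _ = 16 / b ^ 2 * Real.exp (-(b / 2) * s) := by
        rw [mul_assoc, ← Real.exp_add]
        congr 2
        ring

lemma maxwellian_measurable (d : ℕ) (D : ℝ) : Measurable (maxwellian d D) := by
  unfold maxwellian
  exact measurable_const.mul
    (((measurable_norm.pow_const 2).neg.div_const (2 * D)).exp)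

lemma dissipation_measurable (d : ℕ) (D ε ρ : ℝ) {f : EuclideanSpace ℝ (Fin d) → ℝ}
    (hf : Measurable f) : Measurable (dissipation d D ε ρ f) := by
  unfold dissipation
  have hM : Measurable fun ξ => ρ * maxwellian d D ξ :=
    (maxwellian_measurable d D).const_mul ρ
  have hs : MeasurableSet {ξ : EuclideanSpace ℝ (Fin d) |
      f ξ = 0 ∧ ρ * maxwellian d D ξ ≠ 0} :=
    (hf (measurableSet_singleton 0)).inter ((hM (measurableSet_singleton 0)).compl)
  refine Measurable.ite hs measurable_const ?_
  apply ENNReal.measurable_ofReal.comp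
  exact (((hf.sub hM).mul ((Real.measurable_log.comp hf).sub
    (Real.measurable_log.comp hM))).div_const (ε ^ 2))

end aux

/-- estimate on the second moment of `f − ρM`: there are constants
`r₀, C > 0` depending only on `d` and `D` such that for every `ε > 0` and nonnegative
measurable `f` with `ρ := ∫ f ∈ (0,∞)` and `∫ |ξ|² f < ∞`,
`∫ |ξ|² |f − ρM| dξ ≤ r₀ ε² ∫ 𝒟 + C ε ρ^{1/2} (∫ 𝒟)^{1/2}` in `[0,∞]`. -/
theorem second_moment_estimate (d : ℕ) (hd : 1 ≤ d) (D : ℝ) (hD : 0 < D) :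
    ∃ r₀ > (0 : ℝ), ∃ C > (0 : ℝ),
      ∀ ε : ℝ, 0 < ε →
      ∀ f : EuclideanSpace ℝ (Fin d) → ℝ, Measurable f → (∀ ξ, 0 ≤ f ξ) →
        Integrable f → 0 < ∫ ξ, f ξ →
        Integrable (fun ξ => ‖ξ‖ ^ 2 * f ξ) →
        (∫⁻ ξ, ENNReal.ofReal (‖ξ‖ ^ 2 * |f ξ - (∫ η, f η) * maxwellian d D ξ|)) ≤
          ENNReal.ofReal (r₀ * ε ^ 2) * (∫⁻ ξ, dissipation d D ε (∫ η, f η) f ξ) +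
            ENNReal.ofReal (C * ε * Real.sqrt (∫ η, f η)) *
              (∫⁻ ξ, dissipation d D ε (∫ η, f η) f ξ) ^ (1 / 2 : ℝ) := by
  classical
  set c₀ : ℝ := (2 * Real.pi * D) ^ (-(d : ℝ) / 2) with hc₀_def
  have hc₀ : 0 < c₀ := Real.rpow_pos_of_pos (by positivity) _
  set J : ℝ := ∫ ξ : EuclideanSpace ℝ (Fin d), ‖ξ‖ ^ 4 *
    Real.exp (-(1 / (4 * D)) * ‖ξ‖ ^ 2) with hJ_def
  have hJ0 : 0 ≤ J := integral_nonneg fun ξ => by positivity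
  refine ⟨8 * D, by positivity, Real.sqrt (2 * c₀ * J) + 1, by positivity, ?_⟩
  intro ε hε f hfm hfpos hfi hρ hfi2
  set ρ : ℝ := ∫ η, f η with hρ_def
  have hρpos : 0 < ρ := hρ
  set C : ℝ := Real.sqrt (2 * c₀ * J) + 1 with hC_def
  have hMpos : ∀ ξ, 0 < ρ * maxwellian d D ξ := fun ξ => by
    unfold maxwellian
    rw [← hc₀_def]
    positivity
  set 𝒟 : EuclideanSpace ℝ (Fin d) → ℝ≥0∞ := dissipation d D ε ρ f with h𝒟_def
  have h𝒟m : Measurable 𝒟 := dissipation_measurable d D ε ρ hfm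
  set Wr : EuclideanSpace ℝ (Fin d) → ℝ := fun ξ =>
    ε * (‖ξ‖ ^ 2 * (Real.sqrt (2 * (ρ * c₀)) * Real.exp (-‖ξ‖ ^ 2 / (8 * D)))) with hWr_def
  have hWr0 : ∀ ξ, 0 ≤ Wr ξ := fun ξ => by rw [hWr_def]; positivity
  set W : EuclideanSpace ℝ (Fin d) → ℝ≥0∞ := fun ξ => ENNReal.ofReal (Wr ξ) with hW_def
  have hWm : Measurable W := by
    apply ENNReal.measurable_ofReal.comp
    rw [hWr_def]
    exact (((measurable_norm.pow_const 2).mul (measurable_const.mul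
      (((measurable_norm.pow_const 2).neg.div_const (8 * D)).exp))).const_mul ε)
  -- pointwise bound
  have hpt : ∀ ξ, ENNReal.ofReal (‖ξ‖ ^ 2 * |f ξ - ρ * maxwellian d D ξ|) ≤
      ENNReal.ofReal (8 * D * ε ^ 2) * 𝒟 ξ + W ξ * 𝒟 ξ ^ (1 / 2 : ℝ) := by
    intro ξ
    have hm := hMpos ξ
    by_cases hfz : f ξ = 0
    · have h𝒟top : 𝒟 ξ = ⊤ := by
        rw [h𝒟_def]; unfold dissipation
        rw [if_pos ⟨hfz, hm.ne'⟩]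
      rw [h𝒟top, ENNReal.mul_top (by
        simp only [ne_eq, ENNReal.ofReal_eq_zero, not_le]
        positivity), top_add]
      exact le_top
    · have ha : 0 < f ξ := lt_of_le_of_ne (hfpos ξ) (Ne.symm hfz)
      have h𝒟eq : 𝒟 ξ = ENNReal.ofReal ((f ξ - ρ * maxwellian d D ξ) *
          (Real.log (f ξ) - Real.log (ρ * maxwellian d D ξ)) / ε ^ 2) := by
        rw [h𝒟_def]; unfold dissipation
        rw [if_neg (fun h => hfz h.1)]
      set Q : ℝ := (f ξ - ρ * maxwellian d D ξ) *
        (Real.log (f ξ) - Real.log (ρ * maxwellian d D ξ)) with hQ_def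
      have hQ0 : 0 ≤ Q := hQ_def ▸ P_nonneg ha hm
      rw [h𝒟eq]
      rw [ENNReal.ofReal_rpow_of_nonneg (by positivity) (by norm_num),
        ← ENNReal.ofReal_mul (by positivity), ← ENNReal.ofReal_mul (hWr0 ξ),
        ← ENNReal.ofReal_add (by positivity) (by
          exact mul_nonneg (hWr0 ξ) (Real.rpow_nonneg (by positivity) _))]
      apply ENNReal.ofReal_le_ofReal
      have hrw1 : 8 * D * ε ^ 2 * (Q / ε ^ 2) = 8 * D * Q := by
        field_simp
        try ring
      have hrw2 : (Q / ε ^ 2) ^ (1 / 2 : ℝ) = Real.sqrt Q / ε := by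
        rw [← Real.sqrt_eq_rpow, Real.sqrt_div hQ0, Real.sqrt_sq hε.le]
      rw [hrw1, hrw2]
      have hkey := key_real (D := D) (ρ := ρ) (c := c₀) (a := f ξ) (x := ‖ξ‖ ^ 2)
        (m := ρ * maxwellian d D ξ)
        (B := Real.sqrt (2 * (ρ * c₀)) * Real.exp (-‖ξ‖ ^ 2 / (8 * D)))
        (P := Q) hD hρpos hc₀ ha (by positivity)
        (by unfold maxwellian; rw [← hc₀_def]; try ring) rfl hQ_def
      calc ‖ξ‖ ^ 2 * |f ξ - ρ * maxwellian d D ξ|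
          ≤ 8 * D * Q + ‖ξ‖ ^ 2 *
            (Real.sqrt (2 * (ρ * c₀)) * Real.exp (-‖ξ‖ ^ 2 / (8 * D))) *
            Real.sqrt Q := hkey
      _ = 8 * D * Q + Wr ξ * (Real.sqrt Q / ε) := by
          rw [hWr_def]
          field_simp
          try ring
  -- integrate
  have hsum : (∫⁻ ξ, ENNReal.ofReal (‖ξ‖ ^ 2 * |f ξ - ρ * maxwellian d D ξ|)) ≤
      (∫⁻ ξ, ENNReal.ofReal (8 * D * ε ^ 2) * 𝒟 ξ) + ∫⁻ ξ, W ξ * 𝒟 ξ ^ (1 / 2 : ℝ) := by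
    calc (∫⁻ ξ, ENNReal.ofReal (‖ξ‖ ^ 2 * |f ξ - ρ * maxwellian d D ξ|))
        ≤ ∫⁻ ξ, (ENNReal.ofReal (8 * D * ε ^ 2) * 𝒟 ξ + W ξ * 𝒟 ξ ^ (1 / 2 : ℝ)) :=
          lintegral_mono hpt
    _ = _ := lintegral_add_left (measurable_const.mul h𝒟m) _
  have h1 : (∫⁻ ξ, ENNReal.ofReal (8 * D * ε ^ 2) * 𝒟 ξ) =
      ENNReal.ofReal (8 * D * ε ^ 2) * ∫⁻ ξ, 𝒟 ξ := lintegral_const_mul _ h𝒟m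
  -- Hölder
  have h𝒟half : Measurable fun ξ => 𝒟 ξ ^ (1 / 2 : ℝ) := h𝒟m.pow measurable_const
  have holder := ENNReal.lintegral_mul_le_Lp_mul_Lq (volume)
    Real.HolderConjugate.two_two
    hWm.aemeasurable h𝒟half.aemeasurable
  have hDpow : ∀ ξ, (𝒟 ξ ^ (1 / 2 : ℝ)) ^ (2 : ℝ) = 𝒟 ξ := fun ξ => by
    rw [← ENNReal.rpow_mul]
    norm_num
  have hWpow : ∀ ξ, W ξ ^ (2 : ℝ) = ENNReal.ofReal
      (ε ^ 2 * (2 * (ρ * c₀)) * (‖ξ‖ ^ 4 * Real.exp (-(1 / (4 * D)) * ‖ξ‖ ^ 2))) := fun ξ => by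
    rw [hW_def]
    rw [ENNReal.ofReal_rpow_of_nonneg (hWr0 ξ) (by norm_num)]
    congr 1
    rw [show ((2:ℝ) : ℝ) = ((2 : ℕ) : ℝ) by norm_num, Real.rpow_natCast]
    rw [hWr_def]
    have hsq : Real.sqrt (2 * (ρ * c₀)) ^ 2 = 2 * (ρ * c₀) :=
      Real.sq_sqrt (by positivity)
    have hexp : Real.exp (-‖ξ‖ ^ 2 / (8 * D)) ^ 2 =
        Real.exp (-(1 / (4 * D)) * ‖ξ‖ ^ 2) := by
      rw [sq, ← Real.exp_add]
      congr 1
      field_simp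
      ring
    rw [mul_pow, mul_pow, mul_pow, hsq, hexp]
    ring
  have hWint : (∫⁻ ξ, W ξ ^ (2 : ℝ)) = ENNReal.ofReal (ε ^ 2 * (2 * (ρ * c₀)) * J) := by
    simp_rw [hWpow]
    rw [← ofReal_integral_eq_lintegral_ofReal
      (((gauss4_integrable d (show 0 < 1 / (4 * D) by positivity)).const_mul
        (ε ^ 2 * (2 * (ρ * c₀)))))
      (Filter.Eventually.of_forall fun ξ => by positivity)]
    rw [integral_const_mul, hJ_def]
  have hcoef : Real.sqrt (ε ^ 2 * (2 * (ρ * c₀)) * J) ≤ C * ε * Real.sqrt ρ := by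
    have he1 : ε ^ 2 * (2 * (ρ * c₀)) * J = (ε ^ 2 * ρ) * (2 * c₀ * J) := by ring
    rw [he1, Real.sqrt_mul (by positivity), Real.sqrt_mul (sq_nonneg ε),
      Real.sqrt_sq hε.le]
    have : Real.sqrt (2 * c₀ * J) ≤ C := by rw [hC_def]; linarith
    calc ε * Real.sqrt ρ * Real.sqrt (2 * c₀ * J)
        ≤ ε * Real.sqrt ρ * C := by
          apply mul_le_mul_of_nonneg_left this (by positivity)
    _ = C * ε * Real.sqrt ρ := by ring
  have h2 : (∫⁻ ξ, W ξ * 𝒟 ξ ^ (1 / 2 : ℝ)) ≤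
      ENNReal.ofReal (C * ε * Real.sqrt ρ) * (∫⁻ ξ, 𝒟 ξ) ^ (1 / 2 : ℝ) := by
    refine le_trans holder ?_
    have : (∫⁻ ξ, (𝒟 ξ ^ (1 / 2 : ℝ)) ^ (2 : ℝ)) = ∫⁻ ξ, 𝒟 ξ := by
      simp_rw [hDpow]
    rw [this, hWint]
    apply mul_le_mul_left
    rw [ENNReal.ofReal_rpow_of_nonneg (by positivity) (by norm_num),
      ← Real.sqrt_eq_rpow]
    exact ENNReal.ofReal_le_ofReal hcoef
  calc (∫⁻ ξ, ENNReal.ofReal (‖ξ‖ ^ 2 * |f ξ - ρ * maxwellian d D ξ|)) ≤ _ := hsum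
  _ ≤ ENNReal.ofReal (8 * D * ε ^ 2) * (∫⁻ ξ, 𝒟 ξ) +
        ENNReal.ofReal (C * ε * Real.sqrt ρ) * (∫⁻ ξ, 𝒟 ξ) ^ (1 / 2 : ℝ) := by
      rw [h1]
      exact add_le_add le_rfl h2
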